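/- (Linear time structure of correlations under backward simulation) Let (N*¹, N*²) be a pair of ℤ≥0-valued random variables with finite positive variances and correlation ρ. Given (N*¹, N*²), let T_i^{(1)}, i ≤ N*¹, and T_i^{(2)}, i ≤ N*², be mutually independent Uniform[0,T] random variables, and set N_t^{(j)} = Σ_{i=1}^{N*^{(j)}} 1(T_i^{(j)} ≤ t). If N*^{(j)} ~ Poisson(λ_j T), then for 0 ≤ t ≤ T, corr(N_t^{(1)}, N_t^{(2)}) = ρ · t/T. -/

import Mathlib

open MeasureTheory ProbabilityTheory

noncomputable def covar {Ω : Type*} [MeasurableSpace Ω] (X Y : Ω → ℝ) (μ : Measure Ω) : ℝ :=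
  (∫ ω, X ω * Y ω ∂μ) - (∫ ω, X ω ∂μ) * (∫ ω, Y ω ∂μ)

noncomputable def pearson {Ω : Type*} [MeasurableSpace Ω] (X Y : Ω → ℝ) (μ : Measure Ω) : ℝ :=
  covar X Y μ / Real.sqrt (variance X μ * variance Y μ)

/-- Index type for the family `((N*¹,N*²), T_i^{(1)}, T_i^{(2)})`. -/
def BS2Type : Option (Bool × ℕ) → Type
  | none => ℕ × ℕ
  | some _ => ℝ

instance : ∀ o, MeasurableSpace (BS2Type o)
  | none => (inferInstance : MeasurableSpace (ℕ × ℕ))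
  | some _ => (inferInstance : MeasurableSpace ℝ)

/-- The family `((N*¹,N*²), T_i^{(1)}, T_i^{(2)})` of random variables. -/
def BS2Fam {Ω : Type*} (Nstar : Ω → ℕ × ℕ) (U : Bool → ℕ → Ω → ℝ) : ∀ o, Ω → BS2Type o
  | none => Nstar
  | some bi => U bi.1 bi.2

/-- The two backward-simulation counting processes. -/
noncomputable def BS2Count {Ω : Type*} (Nstar : Ω → ℕ × ℕ) (U : Bool → ℕ → Ω → ℝ)
    (b : Bool) (t : ℝ) (ω : Ω) : ℕ :=
  ∑ i ∈ Finset.range (if b then (Nstar ω).2 else (Nstar ω).1), if U b i ω ≤ t then 1 else 0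

open scoped ENNReal NNReal
open Real

/-! ### Auxiliary lemmas -/

section Series

lemma poisson_hasSum_exp (r : ℝ) : HasSum (fun n : ℕ => r ^ n / n.factorial) (Real.exp r) := by
  rw [Real.exp_eq_exp_ℝ]
  exact NormedSpace.expSeries_div_hasSum_exp r

lemma poisson_hasSum_id (r : ℝ) :
    HasSum (fun n : ℕ => (n : ℝ) * (r ^ n / n.factorial)) (r * Real.exp r) := by
  refine (hasSum_nat_add_iff' 1).mp ?_
  have h := (poisson_hasSum_exp r).mul_left r
  have he : (fun n : ℕ => r * (r ^ n / n.factorial))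
      = fun n : ℕ => ((n + 1 : ℕ) : ℝ) * (r ^ (n + 1) / (n + 1).factorial) := by
    ext n
    have hf : ((n + 1).factorial : ℝ) = ((n:ℝ) + 1) * n.factorial := by
      rw [Nat.factorial_succ]; push_cast; ring
    have h1 : ((n:ℝ) + 1) ≠ 0 := by positivity
    have h2 : (n.factorial : ℝ) ≠ 0 := Nat.cast_ne_zero.mpr n.factorial_ne_zero
    rw [hf]
    push_cast
    field_simp
    ring
  rw [he] at h
  simpa using h

lemma poisson_hasSum_sq (r : ℝ) :
    HasSum (fun n : ℕ => (n : ℝ)^2 * (r ^ n / n.factorial)) ((r^2 + r) * Real.exp r) := by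
  have h2 : HasSum (fun n : ℕ => (n : ℝ) * ((n:ℝ) - 1) * (r ^ n / n.factorial))
      (r^2 * Real.exp r) := by
    refine (hasSum_nat_add_iff' 2).mp ?_
    have h := (poisson_hasSum_exp r).mul_left (r^2)
    have he : (fun n : ℕ => r^2 * (r ^ n / n.factorial))
        = fun n : ℕ => ((n + 2 : ℕ) : ℝ) * (((n + 2 : ℕ):ℝ) - 1) * (r ^ (n + 2) / (n + 2).factorial) := by
      ext n
      have hf : ((n + 2).factorial : ℝ) = ((n:ℝ) + 2) * (((n:ℝ) + 1) * n.factorial) := by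
        rw [Nat.factorial_succ, Nat.factorial_succ]; push_cast; ring
      have h2 : (n.factorial : ℝ) ≠ 0 := Nat.cast_ne_zero.mpr n.factorial_ne_zero
      rw [hf]
      push_cast
      have ha : ((n:ℝ) + 2) ≠ 0 := by positivity
      have hb : ((n:ℝ) + 1) ≠ 0 := by positivity
      field_simp
      ring
    rw [he] at h
    simpa [Finset.sum_range_succ] using h
  have hs := h2.add (poisson_hasSum_id r)
  have he : (fun n : ℕ => (n : ℝ) * ((n:ℝ) - 1) * (r ^ n / n.factorial)
      + (n : ℝ) * (r ^ n / n.factorial)) = fun n : ℕ => (n : ℝ)^2 * (r ^ n / n.factorial) := by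
    ext n; ring
  rw [he] at hs
  convert hs using 1
  ring

lemma poissonMeasure_singleton (r : ℝ≥0) (n : ℕ) :
    poissonMeasure r {n} = ENNReal.ofReal (poissonPMFReal r n) := by
  rw [ProbabilityTheory.poissonMeasure_singleton]
  rfl

lemma lintegral_poisson (r : ℝ≥0) (f : ℕ → ℝ≥0∞) :
    ∫⁻ n, f n ∂ poissonMeasure r = ∑' n, f n * ENNReal.ofReal (poissonPMFReal r n) := by
  rw [lintegral_countable' f]
  simp [_root_.poissonMeasure_singleton]

lemma lintegral_poisson_id (r : ℝ≥0) :
    ∫⁻ n, (n : ℝ≥0∞) ∂ poissonMeasure r = ENNReal.ofReal r := by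
  rw [lintegral_poisson]
  have h1 : ∀ n : ℕ, (n : ℝ≥0∞) * ENNReal.ofReal (poissonPMFReal r n)
      = ENNReal.ofReal ((n : ℝ) * poissonPMFReal r n) := by
    intro n
    rw [ENNReal.ofReal_mul (by positivity), ENNReal.ofReal_natCast]
  simp_rw [h1]
  have hs : HasSum (fun n : ℕ => (n : ℝ) * poissonPMFReal r n) (r : ℝ) := by
    have := (poisson_hasSum_id (r : ℝ)).mul_left (Real.exp (-(r:ℝ)))
    have he : (fun n : ℕ => Real.exp (-(r:ℝ)) * ((n:ℝ) * ((r:ℝ) ^ n / n.factorial)))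
        = fun n : ℕ => (n : ℝ) * poissonPMFReal r n := by
      ext n; rw [poissonPMFReal]; ring
    rw [he] at this
    have hv : Real.exp (-(r:ℝ)) * ((r:ℝ) * Real.exp (r:ℝ)) = (r : ℝ) := by
      rw [← mul_assoc, mul_comm (Real.exp _), mul_assoc, ← Real.exp_add]
      simp
    rwa [hv] at this
  rw [← ENNReal.ofReal_tsum_of_nonneg
    (fun n => mul_nonneg (by positivity) poissonPMFReal_nonneg) hs.summable, hs.tsum_eq]

lemma lintegral_poisson_sq (r : ℝ≥0) :
    ∫⁻ n, ((n : ℝ≥0∞))^2 ∂ poissonMeasure r = ENNReal.ofReal ((r:ℝ)^2 + r) := by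
  rw [lintegral_poisson]
  have h1 : ∀ n : ℕ, ((n : ℝ≥0∞))^2 * ENNReal.ofReal (poissonPMFReal r n)
      = ENNReal.ofReal ((n : ℝ)^2 * poissonPMFReal r n) := by
    intro n
    rw [ENNReal.ofReal_mul (by positivity)]
    congr 1
    rw [← ENNReal.ofReal_natCast n, ← ENNReal.ofReal_pow (by positivity)]
  simp_rw [h1]
  have hs : HasSum (fun n : ℕ => (n : ℝ)^2 * poissonPMFReal r n) ((r:ℝ)^2 + r) := by
    have := (poisson_hasSum_sq (r : ℝ)).mul_left (Real.exp (-(r:ℝ)))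
    have he : (fun n : ℕ => Real.exp (-(r:ℝ)) * ((n:ℝ)^2 * ((r:ℝ) ^ n / n.factorial)))
        = fun n : ℕ => (n : ℝ)^2 * poissonPMFReal r n := by
      ext n; rw [poissonPMFReal]; ring
    rw [he] at this
    have hv : Real.exp (-(r:ℝ)) * (((r:ℝ)^2 + r) * Real.exp (r:ℝ)) = ((r:ℝ)^2 + r) := by
      rw [← mul_assoc, mul_comm (Real.exp _), mul_assoc, ← Real.exp_add]
      simp
    rwa [hv] at this
  rw [← ENNReal.ofReal_tsum_of_nonneg
    (fun n => mul_nonneg (by positivity) poissonPMFReal_nonneg) hs.summable, hs.tsum_eq]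

end Series

section TsumInd

variable {Ω : Type*} [MeasurableSpace Ω] {μ : Measure Ω}

lemma lint_tsum_ind (E : ℕ → Set Ω) (hE : ∀ i, MeasurableSet (E i)) :
    ∫⁻ ω, (∑' i, (E i).indicator (1 : Ω → ℝ≥0∞) ω) ∂μ = ∑' i, μ (E i) := by
  rw [lintegral_tsum (fun i => ((measurable_one.indicator (hE i))).aemeasurable)]
  simp_rw [lintegral_indicator_one (hE _)]

lemma lint_tsum_ind_mul (E F : ℕ → Set Ω) (hE : ∀ i, MeasurableSet (E i))
    (hF : ∀ j, MeasurableSet (F j)) :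
    ∫⁻ ω, (∑' i, (E i).indicator (1 : Ω → ℝ≥0∞) ω) * (∑' j, (F j).indicator (1 : Ω → ℝ≥0∞) ω) ∂μ
      = ∑' ij : ℕ × ℕ, μ (E ij.1 ∩ F ij.2) := by
  have hpt : ∀ ω, (∑' i, (E i).indicator (1 : Ω → ℝ≥0∞) ω)
      * (∑' j, (F j).indicator (1 : Ω → ℝ≥0∞) ω)
      = ∑' ij : ℕ × ℕ, (E ij.1 ∩ F ij.2).indicator (1 : Ω → ℝ≥0∞) ω := by
    intro ω
    rw [← ENNReal.tsum_mul_right,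
      (ENNReal.tsum_prod (f := fun i j => (E i ∩ F j).indicator (1 : Ω → ℝ≥0∞) ω))]
    congr 1
    ext i
    rw [← ENNReal.tsum_mul_left]
    congr 1
    ext j
    rw [Set.inter_indicator_one]; rfl
  simp_rw [hpt]
  rw [lintegral_tsum (f := fun (ij : ℕ × ℕ) (ω : Ω) => (E ij.1 ∩ F ij.2).indicator (1 : Ω → ℝ≥0∞) ω)
    (fun ij => ((measurable_one.indicator ((hE ij.1).inter (hF ij.2)))).aemeasurable)]
  simp_rw [lintegral_indicator_one ((hE _).inter (hF _))]

lemma nat_cast_tsum_ind (n : ℕ) :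
    (n : ℝ≥0∞) = ∑' i : ℕ, if i < n then 1 else 0 := by
  rw [tsum_eq_sum (s := Finset.range n) (fun i hi => by simp [Finset.mem_range.not.mp hi])]
  have h : ∀ i ∈ Finset.range n, (if i < n then (1:ℝ≥0∞) else 0) = 1 :=
    fun i hi => by simp [Finset.mem_range.mp hi]
  rw [Finset.sum_congr rfl h]
  simp

end TsumInd

section BSaux

variable {Ω : Type*} [MeasureSpace Ω]
  (Nstar : Ω → ℕ × ℕ) (U : Bool → ℕ → Ω → ℝ)

lemma BS2_pair (hindep : iIndepFun (BS2Fam Nstar U) ℙ)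
    (s : Set (ℕ × ℕ)) (hs : MeasurableSet s) (b : Bool) (i : ℕ)
    (A : Set ℝ) (hA : MeasurableSet A) :
    (ℙ : Measure Ω) (Nstar ⁻¹' s ∩ U b i ⁻¹' A)
      = ℙ (Nstar ⁻¹' s) * ℙ (U b i ⁻¹' A) := by
  classical
  have h := hindep.measure_inter_preimage_eq_mul (S := {none, some (b, i)})
    (sets := fun o => match o with
      | none => s
      | some _ => A)
    (fun o _ => by cases o with
      | none => exact hs
      | some bi => exact hA)
  simp [Finset.set_biInter_insert, BS2Fam] at h
  exact h

lemma BS2_triple (hindep : iIndepFun (BS2Fam Nstar U) ℙ)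
    (s : Set (ℕ × ℕ)) (hs : MeasurableSet s) (b b' : Bool) (i j : ℕ)
    (hne : (b, i) ≠ (b', j)) (A : Set ℝ) (hA : MeasurableSet A) :
    (ℙ : Measure Ω) (Nstar ⁻¹' s ∩ (U b i ⁻¹' A ∩ U b' j ⁻¹' A))
      = ℙ (Nstar ⁻¹' s) * (ℙ (U b i ⁻¹' A) * ℙ (U b' j ⁻¹' A)) := by
  classical
  have h := hindep.measure_inter_preimage_eq_mul (S := {none, some (b, i), some (b', j)})
    (sets := fun o => match o with
      | none => s
      | some _ => A)
    (fun o _ => by cases o with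
      | none => exact hs
      | some bi => exact hA)
  simp [Finset.set_biInter_insert, BS2Fam, Finset.prod_insert, Finset.mem_insert, hne,
    Set.inter_assoc] at h
  exact h

variable {μ : Measure Ω}

lemma unif_prob {T t : ℝ} (hT : 0 < T) (htT : t ≤ T)
    {X : Ω → ℝ} (hX : pdf.IsUniform X (Set.Icc 0 T) μ) :
    μ (X ⁻¹' Set.Iic t) = ENNReal.ofReal (t / T) := by
  have hvol : (volume (Set.Icc (0:ℝ) T)) = ENNReal.ofReal T := by
    rw [Real.volume_Icc, sub_zero]
  have hns : volume (Set.Icc (0:ℝ) T) ≠ 0 := by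
    rw [hvol]; simp [hT, hT.le, ENNReal.ofReal_eq_zero, not_le]
  have hnt : volume (Set.Icc (0:ℝ) T) ≠ ∞ := by rw [hvol]; exact ENNReal.ofReal_ne_top
  rw [hX.measure_preimage hns hnt measurableSet_Iic]
  have hset : Set.Icc (0:ℝ) T ∩ Set.Iic t = Set.Icc 0 t := by
    ext x
    simp only [Set.mem_inter_iff, Set.mem_Icc, Set.mem_Iic]
    constructor
    · rintro ⟨⟨h1, _⟩, h3⟩; exact ⟨h1, h3⟩
    · rintro ⟨h1, h3⟩; exact ⟨⟨h1, h3.trans htT⟩, h3⟩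
  rw [hset, hvol, Real.volume_Icc, sub_zero, ENNReal.ofReal_div_of_pos hT]

lemma measurable_nat_comp {α : Type*} [MeasurableSpace α] {ν : Ω → ℕ} (hν : Measurable ν)
    (F : ℕ → Ω → α) (hF : ∀ n, Measurable (F n)) : Measurable fun ω => F (ν ω) ω := by
  intro s hs
  have h : (fun ω => F (ν ω) ω) ⁻¹' s = ⋃ n, (ν ⁻¹' {n}) ∩ (F n ⁻¹' s) := by
    ext ω
    simp only [Set.mem_preimage, Set.mem_iUnion, Set.mem_inter_iff, Set.mem_singleton_iff]
    constructor
    · intro h; exact ⟨ν ω, rfl, h⟩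
    · rintro ⟨n, rfl, h⟩; exact h
  rw [h]
  exact MeasurableSet.iUnion fun n => ((hν (measurableSet_singleton n)).inter (hF n hs))

lemma BS2Count_measurable (hNmeas : Measurable Nstar) (hUmeas : ∀ b i, Measurable (U b i))
    (b : Bool) (t : ℝ) : Measurable (BS2Count Nstar U b t) := by
  unfold BS2Count
  refine measurable_nat_comp (ν := fun ω => if b then (Nstar ω).2 else (Nstar ω).1) ?_
    (fun n ω => ∑ i ∈ Finset.range n, if U b i ω ≤ t then 1 else 0) ?_
  · cases b
    · simpa using hNmeas.fst
    · simpa using hNmeas.snd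
  · intro n
    apply Finset.measurable_sum
    intro i _
    exact Measurable.ite ((hUmeas b i) measurableSet_Iic) measurable_const measurable_const

/-- The "level" events of `Nstar`. -/
def bsA (Nstar : Ω → ℕ × ℕ) (b : Bool) (i : ℕ) : Set Ω :=
  {ω | i < (if b then (Nstar ω).2 else (Nstar ω).1)}

/-- The contribution events of the counting processes. -/
def bsE (Nstar : Ω → ℕ × ℕ) (U : Bool → ℕ → Ω → ℝ) (t : ℝ) (b : Bool) (i : ℕ) : Set Ω :=
  bsA Nstar b i ∩ U b i ⁻¹' Set.Iic t

lemma bsA_measurable (hNmeas : Measurable Nstar) (b : Bool) (i : ℕ) :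
    MeasurableSet (bsA Nstar b i) :=
  hNmeas (MeasurableSet.of_discrete (s := {q : ℕ × ℕ | i < (if b then q.2 else q.1)}))

lemma bsE_measurable (hNmeas : Measurable Nstar) (hUmeas : ∀ b i, Measurable (U b i))
    (t : ℝ) (b : Bool) (i : ℕ) : MeasurableSet (bsE Nstar U t b i) :=
  (bsA_measurable Nstar hNmeas b i).inter ((hUmeas b i) measurableSet_Iic)

lemma bsE_prob (hindep : iIndepFun (BS2Fam Nstar U) ℙ)
    {T t : ℝ} (hT : 0 < T) (htT : t ≤ T)
    (hUunif : ∀ b i, pdf.IsUniform (U b i) (Set.Icc 0 T) ℙ) (b : Bool) (i : ℕ) :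
    (ℙ : Measure Ω) (bsE Nstar U t b i) = ℙ (bsA Nstar b i) * ENNReal.ofReal (t / T) := by
  have h := BS2_pair Nstar U hindep {q : ℕ × ℕ | i < (if b then q.2 else q.1)} .of_discrete
    b i (Set.Iic t) measurableSet_Iic
  rw [unif_prob hT htT (hUunif b i)] at h
  exact h

lemma bsE_prob2 (hindep : iIndepFun (BS2Fam Nstar U) ℙ)
    {T t : ℝ} (hT : 0 < T) (htT : t ≤ T)
    (hUunif : ∀ b i, pdf.IsUniform (U b i) (Set.Icc 0 T) ℙ) (b b' : Bool) (i j : ℕ)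
    (hne : (b, i) ≠ (b', j)) :
    (ℙ : Measure Ω) (bsE Nstar U t b i ∩ bsE Nstar U t b' j)
      = ℙ (bsA Nstar b i ∩ bsA Nstar b' j)
        * (ENNReal.ofReal (t / T) * ENNReal.ofReal (t / T)) := by
  have h := BS2_triple Nstar U hindep
    ({q : ℕ × ℕ | i < (if b then q.2 else q.1)} ∩ {q : ℕ × ℕ | j < (if b' then q.2 else q.1)})
    .of_discrete b b' i j hne (Set.Iic t) measurableSet_Iic
  rw [unif_prob hT htT (hUunif b i), unif_prob hT htT (hUunif b' j)] at h
  rw [bsE, bsE, Set.inter_inter_inter_comm]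
  exact h

lemma bs_count_repr (t : ℝ) (b : Bool) (ω : Ω) :
    ((BS2Count Nstar U b t ω : ℕ) : ℝ≥0∞)
      = ∑' i, (bsE Nstar U t b i).indicator (1 : Ω → ℝ≥0∞) ω := by
  classical
  rw [tsum_eq_sum (s := Finset.range (if b then (Nstar ω).2 else (Nstar ω).1))
    (fun i hi => by
      simp only [bsE, bsA, Set.indicator_apply, Set.mem_inter_iff, Set.mem_setOf_eq]
      rw [if_neg]
      rintro ⟨h1, -⟩
      exact hi (Finset.mem_range.mpr h1))]
  rw [BS2Count]
  push_cast
  refine Finset.sum_congr rfl fun i hi => ?_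
  simp [bsE, bsA, Set.indicator_apply, Set.mem_setOf_eq, Finset.mem_range.mp hi]

lemma bs_nu_repr (b : Bool) (ω : Ω) :
    (((if b then (Nstar ω).2 else (Nstar ω).1 : ℕ)) : ℝ≥0∞)
      = ∑' i, (bsA Nstar b i).indicator (1 : Ω → ℝ≥0∞) ω := by
  rw [nat_cast_tsum_ind]
  exact tsum_congr fun i => by simp [bsA, Set.indicator_apply]

lemma bs_lint_count (hNmeas : Measurable Nstar) (hUmeas : ∀ b i, Measurable (U b i))
    (t : ℝ) (b : Bool) :
    ∫⁻ ω, ((BS2Count Nstar U b t ω : ℕ) : ℝ≥0∞) ∂(ℙ : Measure Ω)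
      = ∑' i, (ℙ : Measure Ω) (bsE Nstar U t b i) := by
  simp_rw [bs_count_repr]
  exact lint_tsum_ind _ (bsE_measurable Nstar U hNmeas hUmeas t b)

lemma bs_lint_count_mul (hNmeas : Measurable Nstar) (hUmeas : ∀ b i, Measurable (U b i))
    (t : ℝ) (b b' : Bool) :
    ∫⁻ ω, ((BS2Count Nstar U b t ω : ℕ) : ℝ≥0∞) * ((BS2Count Nstar U b' t ω : ℕ) : ℝ≥0∞)
        ∂(ℙ : Measure Ω)
      = ∑' ij : ℕ × ℕ, (ℙ : Measure Ω) (bsE Nstar U t b ij.1 ∩ bsE Nstar U t b' ij.2) := by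
  simp_rw [bs_count_repr]
  exact lint_tsum_ind_mul _ _ (bsE_measurable Nstar U hNmeas hUmeas t b)
    (bsE_measurable Nstar U hNmeas hUmeas t b')

lemma bs_lint_nu (hNmeas : Measurable Nstar) (b : Bool) :
    ∫⁻ ω, (((if b then (Nstar ω).2 else (Nstar ω).1 : ℕ)) : ℝ≥0∞) ∂(ℙ : Measure Ω)
      = ∑' i, (ℙ : Measure Ω) (bsA Nstar b i) := by
  simp_rw [bs_nu_repr]
  exact lint_tsum_ind _ (bsA_measurable Nstar hNmeas b)

lemma bs_lint_nu_mul (hNmeas : Measurable Nstar) (b b' : Bool) :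
    ∫⁻ ω, (((if b then (Nstar ω).2 else (Nstar ω).1 : ℕ)) : ℝ≥0∞)
        * (((if b' then (Nstar ω).2 else (Nstar ω).1 : ℕ)) : ℝ≥0∞) ∂(ℙ : Measure Ω)
      = ∑' ij : ℕ × ℕ, (ℙ : Measure Ω) (bsA Nstar b ij.1 ∩ bsA Nstar b' ij.2) := by
  simp_rw [bs_nu_repr]
  exact lint_tsum_ind_mul _ _ (bsA_measurable Nstar hNmeas b) (bsA_measurable Nstar hNmeas b')

end BSaux


section RealHelpers

variable {Ω : Type*} [MeasurableSpace Ω] {μ : Measure Ω}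

lemma meas_natCastR : Measurable (fun n : ℕ => (n : ℝ)) := Measurable.of_discrete

lemma integral_nat_eq_toReal {f : Ω → ℕ} (hf : Measurable f) :
    ∫ ω, (f ω : ℝ) ∂μ = (∫⁻ ω, (f ω : ℝ≥0∞) ∂μ).toReal := by
  rw [integral_eq_lintegral_of_nonneg_ae (ae_of_all _ fun ω => by positivity)
    ((show Measurable fun ω => (f ω : ℝ) from meas_natCastR.comp hf).aestronglyMeasurable)]
  congr 1
  refine lintegral_congr fun ω => ?_
  rw [ENNReal.ofReal_natCast]

lemma integral_nat_mul_eq_toReal {f g : Ω → ℕ} (hf : Measurable f) (hg : Measurable g) :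
    ∫ ω, (f ω : ℝ) * (g ω : ℝ) ∂μ
      = (∫⁻ ω, (f ω : ℝ≥0∞) * (g ω : ℝ≥0∞) ∂μ).toReal := by
  rw [integral_eq_lintegral_of_nonneg_ae (ae_of_all _ fun ω => by positivity)
    ((show Measurable fun ω => (f ω : ℝ) * (g ω : ℝ) from (show Measurable fun ω => (f ω : ℝ) from meas_natCastR.comp hf).mul
      (show Measurable fun ω => (g ω : ℝ) from meas_natCastR.comp hg)).aestronglyMeasurable)]
  congr 1
  refine lintegral_congr fun ω => ?_
  rw [ENNReal.ofReal_mul (by positivity), ENNReal.ofReal_natCast, ENNReal.ofReal_natCast]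

lemma integral_nat_sq_eq_toReal {f : Ω → ℕ} (hf : Measurable f) :
    ∫ ω, ((f ω : ℝ)) ^ 2 ∂μ = (∫⁻ ω, (f ω : ℝ≥0∞) * (f ω : ℝ≥0∞) ∂μ).toReal := by
  simp_rw [pow_two]
  exact integral_nat_mul_eq_toReal hf hf

lemma memLp_nat_two {f : Ω → ℕ} (hf : Measurable f)
    (hfin : ∫⁻ ω, (f ω : ℝ≥0∞) * (f ω : ℝ≥0∞) ∂μ ≠ ⊤) :
    MemLp (fun ω => (f ω : ℝ)) 2 μ := by
  have hm : Measurable (fun ω => (f ω : ℝ)) := meas_natCastR.comp hf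
  rw [memLp_two_iff_integrable_sq hm.aestronglyMeasurable]
  refine ⟨(hm.pow_const 2).aestronglyMeasurable, ?_⟩
  rw [hasFiniteIntegral_iff_ofReal (ae_of_all _ fun ω => by positivity)]
  have h : ∀ ω, ENNReal.ofReal ((f ω : ℝ) ^ 2) = (f ω : ℝ≥0∞) * (f ω : ℝ≥0∞) := by
    intro ω
    rw [pow_two, ENNReal.ofReal_mul (by positivity), ENNReal.ofReal_natCast]
  rw [lintegral_congr h]
  exact lt_top_iff_ne_top.mpr hfin

end RealHelpers



/-- Linear time structure of correlations under backward simulation: if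
`N*^{(j)} ~ Poisson(λ_j T)` with correlation `ρ`, and the arrival times are mutually
independent `Uniform[0,T]` independent of `(N*¹,N*²)`, then
`corr(N_t^{(1)}, N_t^{(2)}) = ρ·t/T` for `0 ≤ t ≤ T`. -/
theorem backward_simulation_linear_correlation
    {Ω : Type*} [MeasureSpace Ω] [IsProbabilityMeasure (ℙ : Measure Ω)]
    (lam₁ lam₂ T : ℝ) (hlam₁ : 0 < lam₁) (hlam₂ : 0 < lam₂) (hT : 0 < T)
    (Nstar : Ω → ℕ × ℕ) (U : Bool → ℕ → Ω → ℝ)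
    (hNmeas : Measurable Nstar) (hUmeas : ∀ b i, Measurable (U b i))
    (hindep : iIndepFun (BS2Fam Nstar U) ℙ)
    (hN₁ : Measure.map (fun ω => (Nstar ω).1) ℙ
      = poissonMeasure ⟨lam₁ * T, mul_nonneg hlam₁.le hT.le⟩)
    (hN₂ : Measure.map (fun ω => (Nstar ω).2) ℙ
      = poissonMeasure ⟨lam₂ * T, mul_nonneg hlam₂.le hT.le⟩)
    (hUunif : ∀ b i, pdf.IsUniform (U b i) (Set.Icc 0 T) ℙ)
    (ρ : ℝ)
    (hρ : pearson (fun ω => ((Nstar ω).1 : ℝ)) (fun ω => ((Nstar ω).2 : ℝ)) ℙ = ρ)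
    (t : ℝ) (ht0 : 0 ≤ t) (htT : t ≤ T) :
    pearson (fun ω => (BS2Count Nstar U false t ω : ℝ))
            (fun ω => (BS2Count Nstar U true t ω : ℝ)) ℙ = ρ * t / T := by
  classical
  set pr : ℝ := t / T with hprdef
  set p : ℝ≥0∞ := ENNReal.ofReal pr with hpdef
  have hpr0 : 0 ≤ pr := div_nonneg ht0 hT.le
  have hpr1 : pr ≤ 1 := (div_le_one hT).mpr htT
  have hp1 : p ≤ 1 := ENNReal.ofReal_le_one.mpr hpr1
  have hpt : p ≠ ⊤ := ENNReal.ofReal_ne_top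
  have hpp : p * p ≤ p := by
    calc p * p ≤ 1 * p := mul_le_mul_left hp1 p
    _ = p := one_mul p
  have hptoReal : p.toReal = pr := ENNReal.toReal_ofReal hpr0
  set e₁ : ℝ := lam₁ * T with he₁
  set e₂ : ℝ := lam₂ * T with he₂
  have he₁0 : 0 < e₁ := mul_pos hlam₁ hT
  have he₂0 : 0 < e₂ := mul_pos hlam₂ hT
  -- measurability of counts
  have hXm : Measurable (BS2Count Nstar U false t) := BS2Count_measurable Nstar U hNmeas hUmeas false t
  have hYm : Measurable (BS2Count Nstar U true t) := BS2Count_measurable Nstar U hNmeas hUmeas true t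
  -- N* moments in ℝ≥0∞
  have hL1 : ∫⁻ ω, (((Nstar ω).1 : ℕ) : ℝ≥0∞) ∂(ℙ : Measure Ω) = ENNReal.ofReal e₁ := by
    rw [← lintegral_map (f := fun n : ℕ => (n : ℝ≥0∞)) Measurable.of_discrete hNmeas.fst, hN₁]
    exact lintegral_poisson_id _
  have hL2 : ∫⁻ ω, (((Nstar ω).2 : ℕ) : ℝ≥0∞) ∂(ℙ : Measure Ω) = ENNReal.ofReal e₂ := by
    rw [← lintegral_map (f := fun n : ℕ => (n : ℝ≥0∞)) Measurable.of_discrete hNmeas.snd, hN₂]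
    exact lintegral_poisson_id _
  have hL1sq : ∫⁻ ω, (((Nstar ω).1 : ℕ) : ℝ≥0∞) * (((Nstar ω).1 : ℕ) : ℝ≥0∞) ∂(ℙ : Measure Ω)
      = ENNReal.ofReal (e₁ ^ 2 + e₁) := by
    simp_rw [← pow_two]
    rw [← lintegral_map (f := fun n : ℕ => ((n : ℝ≥0∞)) ^ 2) Measurable.of_discrete hNmeas.fst,
      hN₁]
    exact lintegral_poisson_sq _
  have hL2sq : ∫⁻ ω, (((Nstar ω).2 : ℕ) : ℝ≥0∞) * (((Nstar ω).2 : ℕ) : ℝ≥0∞) ∂(ℙ : Measure Ω)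
      = ENNReal.ofReal (e₂ ^ 2 + e₂) := by
    simp_rw [← pow_two]
    rw [← lintegral_map (f := fun n : ℕ => ((n : ℝ≥0∞)) ^ 2) Measurable.of_discrete hNmeas.snd,
      hN₂]
    exact lintegral_poisson_sq _
  -- tail sums
  have hS1 : (∑' i, (ℙ : Measure Ω) (bsA Nstar false i)) = ENNReal.ofReal e₁ := by
    rw [← bs_lint_nu Nstar hNmeas false]
    simpa using hL1
  have hS2 : (∑' i, (ℙ : Measure Ω) (bsA Nstar true i)) = ENNReal.ofReal e₂ := by
    rw [← bs_lint_nu Nstar hNmeas true]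
    simpa using hL2
  have hSS1 : (∑' ij : ℕ × ℕ, (ℙ : Measure Ω) (bsA Nstar false ij.1 ∩ bsA Nstar false ij.2))
      = ENNReal.ofReal (e₁ ^ 2 + e₁) := by
    rw [← bs_lint_nu_mul Nstar hNmeas false false]
    simpa using hL1sq
  have hSS2 : (∑' ij : ℕ × ℕ, (ℙ : Measure Ω) (bsA Nstar true ij.1 ∩ bsA Nstar true ij.2))
      = ENNReal.ofReal (e₂ ^ 2 + e₂) := by
    rw [← bs_lint_nu_mul Nstar hNmeas true true]
    simpa using hL2sq
  set S12 : ℝ≥0∞ := ∑' ij : ℕ × ℕ, (ℙ : Measure Ω) (bsA Nstar false ij.1 ∩ bsA Nstar true ij.2)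
    with hS12def
  have hL12 : ∫⁻ ω, (((Nstar ω).1 : ℕ) : ℝ≥0∞) * (((Nstar ω).2 : ℕ) : ℝ≥0∞) ∂(ℙ : Measure Ω)
      = S12 := by
    rw [hS12def, ← bs_lint_nu_mul Nstar hNmeas false true]
    simp
  have hS12fin : S12 ≠ ⊤ := by
    rw [← hL12]
    have hmono : ∫⁻ ω, (((Nstar ω).1 : ℕ) : ℝ≥0∞) * (((Nstar ω).2 : ℕ) : ℝ≥0∞) ∂(ℙ : Measure Ω)
        ≤ ∫⁻ ω, (((Nstar ω).1 : ℕ) : ℝ≥0∞) * (((Nstar ω).1 : ℕ) : ℝ≥0∞)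
          + (((Nstar ω).2 : ℕ) : ℝ≥0∞) * (((Nstar ω).2 : ℕ) : ℝ≥0∞) ∂(ℙ : Measure Ω) := by
      refine lintegral_mono fun ω => ?_
      rcases le_total (((Nstar ω).1 : ℕ) : ℝ≥0∞) (((Nstar ω).2 : ℕ) : ℝ≥0∞) with h | h
      · calc (((Nstar ω).1 : ℕ) : ℝ≥0∞) * (((Nstar ω).2 : ℕ) : ℝ≥0∞)
            ≤ (((Nstar ω).2 : ℕ) : ℝ≥0∞) * (((Nstar ω).2 : ℕ) : ℝ≥0∞) := mul_le_mul_left h _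
        _ ≤ _ := le_add_self
      · calc (((Nstar ω).1 : ℕ) : ℝ≥0∞) * (((Nstar ω).2 : ℕ) : ℝ≥0∞)
            ≤ (((Nstar ω).1 : ℕ) : ℝ≥0∞) * (((Nstar ω).1 : ℕ) : ℝ≥0∞) := mul_le_mul_right h _
        _ ≤ _ := le_self_add
    refine ne_top_of_le_ne_top ?_ hmono
    have hc : Measurable (fun n : ℕ => (n : ℝ≥0∞)) := Measurable.of_discrete
    have hm1 : Measurable fun ω : Ω => (((Nstar ω).1 : ℕ) : ℝ≥0∞) := hc.comp hNmeas.fst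
    rw [lintegral_add_left (show Measurable fun ω : Ω => (((Nstar ω).1 : ℕ) : ℝ≥0∞) * (((Nstar ω).1 : ℕ) : ℝ≥0∞) from hm1.mul hm1), hL1sq, hL2sq]
    exact ENNReal.add_ne_top.mpr ⟨ENNReal.ofReal_ne_top, ENNReal.ofReal_ne_top⟩
  -- count moments in ℝ≥0∞
  have hEX : ∫⁻ ω, ((BS2Count Nstar U false t ω : ℕ) : ℝ≥0∞) ∂(ℙ : Measure Ω)
      = ENNReal.ofReal e₁ * p := by
    rw [bs_lint_count Nstar U hNmeas hUmeas t false,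
      tsum_congr (fun i => bsE_prob Nstar U hindep hT htT hUunif false i),
      ENNReal.tsum_mul_right, hS1]
  have hEY : ∫⁻ ω, ((BS2Count Nstar U true t ω : ℕ) : ℝ≥0∞) ∂(ℙ : Measure Ω)
      = ENNReal.ofReal e₂ * p := by
    rw [bs_lint_count Nstar U hNmeas hUmeas t true,
      tsum_congr (fun i => bsE_prob Nstar U hindep hT htT hUunif true i),
      ENNReal.tsum_mul_right, hS2]
  have hEXY : ∫⁻ ω, ((BS2Count Nstar U false t ω : ℕ) : ℝ≥0∞)
        * ((BS2Count Nstar U true t ω : ℕ) : ℝ≥0∞) ∂(ℙ : Measure Ω)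
      = S12 * (p * p) := by
    rw [bs_lint_count_mul Nstar U hNmeas hUmeas t false true,
      tsum_congr (fun ij : ℕ × ℕ => bsE_prob2 Nstar U hindep hT htT hUunif false true ij.1 ij.2
        (by simp)),
      ENNReal.tsum_mul_right]
  have hEXXaux : ∀ (b : Bool) (eb : ℝ),
      ((∑' i, (ℙ : Measure Ω) (bsA Nstar b i)) = ENNReal.ofReal eb) →
      ((∑' ij : ℕ × ℕ, (ℙ : Measure Ω) (bsA Nstar b ij.1 ∩ bsA Nstar b ij.2))
        = ENNReal.ofReal (eb ^ 2 + eb)) →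
      ∫⁻ ω, ((BS2Count Nstar U b t ω : ℕ) : ℝ≥0∞)
          * ((BS2Count Nstar U b t ω : ℕ) : ℝ≥0∞) ∂(ℙ : Measure Ω)
        = ENNReal.ofReal (eb ^ 2 + eb) * (p * p) + (p - p * p) * ENNReal.ofReal eb := by
    intro b eb hSb hSSb
    rw [bs_lint_count_mul Nstar U hNmeas hUmeas t b b]
    have hsplit : ∀ i j : ℕ,
        (ℙ : Measure Ω) (bsE Nstar U t b i ∩ bsE Nstar U t b j)
          = (ℙ : Measure Ω) (bsA Nstar b i ∩ bsA Nstar b j) * (p * p)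
            + (if j = i then (p - p * p) * (ℙ : Measure Ω) (bsA Nstar b i) else 0) := by
      intro i j
      by_cases hij : j = i
      · subst hij
        rw [Set.inter_self, Set.inter_self, if_pos rfl,
          bsE_prob Nstar U hindep hT htT hUunif b j,
          ← hprdef, ← hpdef, mul_comm (p - p * p), ← mul_add, add_comm (p * p),
          tsub_add_cancel_of_le hpp]
      · rw [if_neg hij, add_zero]
        exact bsE_prob2 Nstar U hindep hT htT hUunif b b i j
          (by simp [Ne.symm hij])
    rw [tsum_congr (fun ij : ℕ × ℕ => hsplit ij.1 ij.2), ENNReal.tsum_add]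
    congr 1
    · rw [ENNReal.tsum_mul_right, hSSb]
    · rw [ENNReal.tsum_prod
        (f := fun i j => if j = i then (p - p * p) * (ℙ : Measure Ω) (bsA Nstar b i) else 0)]
      have hin : ∀ i : ℕ,
          (∑' j : ℕ, if j = i then (p - p * p) * (ℙ : Measure Ω) (bsA Nstar b i) else 0)
            = (p - p * p) * (ℙ : Measure Ω) (bsA Nstar b i) :=
        fun i => tsum_ite_eq i _
      rw [tsum_congr hin, ENNReal.tsum_mul_left, hSb]
  have hEXX := hEXXaux false e₁ hS1 hSS1
  have hEYY := hEXXaux true e₂ hS2 hSS2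
  -- real moments
  have hrEX : ∫ ω, ((BS2Count Nstar U false t ω : ℕ) : ℝ) ∂(ℙ : Measure Ω) = e₁ * pr := by
    rw [integral_nat_eq_toReal hXm, hEX, ENNReal.toReal_mul, ENNReal.toReal_ofReal he₁0.le,
      hptoReal]
  have hrEY : ∫ ω, ((BS2Count Nstar U true t ω : ℕ) : ℝ) ∂(ℙ : Measure Ω) = e₂ * pr := by
    rw [integral_nat_eq_toReal hYm, hEY, ENNReal.toReal_mul, ENNReal.toReal_ofReal he₂0.le,
      hptoReal]
  set s12 : ℝ := S12.toReal with hs12def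
  have hrEXY : ∫ ω, ((BS2Count Nstar U false t ω : ℕ) : ℝ)
        * ((BS2Count Nstar U true t ω : ℕ) : ℝ) ∂(ℙ : Measure Ω) = s12 * (pr * pr) := by
    rw [integral_nat_mul_eq_toReal hXm hYm, hEXY, ENNReal.toReal_mul, ENNReal.toReal_mul,
      hptoReal]
  have hsubval : (p - p * p).toReal = pr - pr * pr := by
    rw [ENNReal.toReal_sub_of_le hpp hpt, ENNReal.toReal_mul, hptoReal]
  have hrEXX : ∫ ω, (((BS2Count Nstar U false t ω : ℕ) : ℝ)) ^ 2 ∂(ℙ : Measure Ω)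
      = (e₁ ^ 2 + e₁) * (pr * pr) + (pr - pr * pr) * e₁ := by
    rw [integral_nat_sq_eq_toReal hXm, hEXX,
      ENNReal.toReal_add (by finiteness) (by finiteness),
      ENNReal.toReal_mul, ENNReal.toReal_mul, ENNReal.toReal_mul, hptoReal, hsubval,
      ENNReal.toReal_ofReal (by positivity), ENNReal.toReal_ofReal he₁0.le]
  have hrEYY : ∫ ω, (((BS2Count Nstar U true t ω : ℕ) : ℝ)) ^ 2 ∂(ℙ : Measure Ω)
      = (e₂ ^ 2 + e₂) * (pr * pr) + (pr - pr * pr) * e₂ := by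
    rw [integral_nat_sq_eq_toReal hYm, hEYY,
      ENNReal.toReal_add (by finiteness) (by finiteness),
      ENNReal.toReal_mul, ENNReal.toReal_mul, ENNReal.toReal_mul, hptoReal, hsubval,
      ENNReal.toReal_ofReal (by positivity), ENNReal.toReal_ofReal he₂0.le]
  -- N* real moments
  have hrN1 : ∫ ω, (((Nstar ω).1 : ℕ) : ℝ) ∂(ℙ : Measure Ω) = e₁ := by
    rw [integral_nat_eq_toReal hNmeas.fst, hL1, ENNReal.toReal_ofReal he₁0.le]
  have hrN2 : ∫ ω, (((Nstar ω).2 : ℕ) : ℝ) ∂(ℙ : Measure Ω) = e₂ := by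
    rw [integral_nat_eq_toReal hNmeas.snd, hL2, ENNReal.toReal_ofReal he₂0.le]
  have hrN12 : ∫ ω, (((Nstar ω).1 : ℕ) : ℝ) * (((Nstar ω).2 : ℕ) : ℝ) ∂(ℙ : Measure Ω) = s12 := by
    rw [integral_nat_mul_eq_toReal hNmeas.fst hNmeas.snd, hL12]
  have hrN1sq : ∫ ω, ((((Nstar ω).1 : ℕ) : ℝ)) ^ 2 ∂(ℙ : Measure Ω) = e₁ ^ 2 + e₁ := by
    rw [integral_nat_sq_eq_toReal hNmeas.fst, hL1sq, ENNReal.toReal_ofReal (by positivity)]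
  have hrN2sq : ∫ ω, ((((Nstar ω).2 : ℕ) : ℝ)) ^ 2 ∂(ℙ : Measure Ω) = e₂ ^ 2 + e₂ := by
    rw [integral_nat_sq_eq_toReal hNmeas.snd, hL2sq, ENNReal.toReal_ofReal (by positivity)]
  -- MemLp
  have hmemX : MemLp (fun ω => ((BS2Count Nstar U false t ω : ℕ) : ℝ)) 2 (ℙ : Measure Ω) :=
    memLp_nat_two hXm (by rw [hEXX]; finiteness)
  have hmemY : MemLp (fun ω => ((BS2Count Nstar U true t ω : ℕ) : ℝ)) 2 (ℙ : Measure Ω) :=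
    memLp_nat_two hYm (by rw [hEYY]; finiteness)
  have hmemN1 : MemLp (fun ω => (((Nstar ω).1 : ℕ) : ℝ)) 2 (ℙ : Measure Ω) :=
    memLp_nat_two hNmeas.fst (by rw [hL1sq]; finiteness)
  have hmemN2 : MemLp (fun ω => (((Nstar ω).2 : ℕ) : ℝ)) 2 (ℙ : Measure Ω) :=
    memLp_nat_two hNmeas.snd (by rw [hL2sq]; finiteness)
  -- variances
  have hvarX : variance (fun ω => ((BS2Count Nstar U false t ω : ℕ) : ℝ)) (ℙ : Measure Ω)
      = pr * e₁ := by
    rw [variance_eq_sub hmemX]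
    simp only [Pi.pow_apply]
    rw [hrEXX, hrEX]
    ring
  have hvarY : variance (fun ω => ((BS2Count Nstar U true t ω : ℕ) : ℝ)) (ℙ : Measure Ω)
      = pr * e₂ := by
    rw [variance_eq_sub hmemY]
    simp only [Pi.pow_apply]
    rw [hrEYY, hrEY]
    ring
  have hvarN1 : variance (fun ω => (((Nstar ω).1 : ℕ) : ℝ)) (ℙ : Measure Ω) = e₁ := by
    rw [variance_eq_sub hmemN1]
    simp only [Pi.pow_apply]
    rw [hrN1sq, hrN1]
    ring
  have hvarN2 : variance (fun ω => (((Nstar ω).2 : ℕ) : ℝ)) (ℙ : Measure Ω) = e₂ := by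
    rw [variance_eq_sub hmemN2]
    simp only [Pi.pow_apply]
    rw [hrN2sq, hrN2]
    ring
  -- covariances
  have hcovXY : covar (fun ω => ((BS2Count Nstar U false t ω : ℕ) : ℝ))
      (fun ω => ((BS2Count Nstar U true t ω : ℕ) : ℝ)) (ℙ : Measure Ω)
      = (pr * pr) * (s12 - e₁ * e₂) := by
    rw [covar, hrEXY, hrEX, hrEY]
    ring
  have hcovN : covar (fun ω => (((Nstar ω).1 : ℕ) : ℝ)) (fun ω => (((Nstar ω).2 : ℕ) : ℝ))
      (ℙ : Measure Ω) = s12 - e₁ * e₂ := by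
    rw [covar, hrN12, hrN1, hrN2]
  -- conclusion
  set C : ℝ := s12 - e₁ * e₂ with hCdef
  have hρval : ρ = C / Real.sqrt (e₁ * e₂) := by
    rw [← hρ, pearson, hcovN, hvarN1, hvarN2]
  rw [pearson, hcovXY, hvarX, hvarY, hρval]
  have hsq : Real.sqrt (pr * e₁ * (pr * e₂)) = pr * Real.sqrt (e₁ * e₂) := by
    rw [show pr * e₁ * (pr * e₂) = pr ^ 2 * (e₁ * e₂) by ring, Real.sqrt_mul (sq_nonneg pr),
      Real.sqrt_sq hpr0]
  rw [hsq]
  have hs : Real.sqrt (e₁ * e₂) ≠ 0 := by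
    positivity
  rcases eq_or_lt_of_le ht0 with h0 | h0
  · have : pr = 0 := by rw [hprdef, ← h0, zero_div]
    rw [this]
    simp [← h0]
  · have hprpos : 0 < pr := div_pos h0 hT
    rw [show (pr * pr) * C = pr * (pr * C) by ring, show pr * Real.sqrt (e₁ * e₂)
      = pr * Real.sqrt (e₁ * e₂) from rfl, mul_div_mul_left _ _ hprpos.ne']
    rw [hprdef]
    field_simp
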